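/- Let ε ∈ ℂ be a primitive 5th root of unity and let G_icosa be the binary icosahedral group, i.e., the subgroup of GL(2,ℂ) generated by the matrices S = [[ε³, 0], [0, ε²]], T = (1/(ε² − ε³))·[[ε + ε⁴, 1], [1, −(ε + ε⁴)]], and U = [[0, 1], [−1, 0]]; it is a subgroup of SU(2) and acts on ℙ(ℂ²). Let x₀ ∈ ℙ(ℂ²) be the line spanned by (1,0). Then the stabilizer {g ∈ G_icosa | g•x₀ = x₀} has exactly 10 elements. -/

import Mathlib

open Matrix

noncomputable section

/-- `ℂ²` with its standard Hermitian inner product. -/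
abbrev E2 := EuclideanSpace ℂ (Fin 2)

/-- `SU(2)`, as a subgroup of the group of invertible `2 × 2` complex matrices. -/
def SU2 : Subgroup (GL (Fin 2) ℂ) where
  carrier := {g | (g : Matrix (Fin 2) (Fin 2) ℂ) ∈ Matrix.specialUnitaryGroup (Fin 2) ℂ}
  one_mem' := show ((1 : GL (Fin 2) ℂ) : Matrix (Fin 2) (Fin 2) ℂ) ∈
      Matrix.specialUnitaryGroup (Fin 2) ℂ from Submonoid.one_mem _
  mul_mem' := fun {a b} ha hb =>
    show ((a * b : GL (Fin 2) ℂ) : Matrix (Fin 2) (Fin 2) ℂ) ∈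
      Matrix.specialUnitaryGroup (Fin 2) ℂ from Submonoid.mul_mem _ ha hb
  inv_mem' := by
    intro a ha
    have ha' : (a : Matrix (Fin 2) (Fin 2) ℂ) ∈ Matrix.specialUnitaryGroup (Fin 2) ℂ := ha
    have h1 : ((a⁻¹ : GL (Fin 2) ℂ) : Matrix (Fin 2) (Fin 2) ℂ)
        = star (a : Matrix (Fin 2) (Fin 2) ℂ) :=
      Units.inv_eq_of_mul_eq_one_right ha'.1.2
    show ((a⁻¹ : GL (Fin 2) ℂ) : Matrix (Fin 2) (Fin 2) ℂ) ∈
      Matrix.specialUnitaryGroup (Fin 2) ℂ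
    rw [Matrix.mem_specialUnitaryGroup_iff] at ha' ⊢
    constructor
    · rw [h1]; exact Unitary.star_mem ha'.1
    · rw [h1, Matrix.star_eq_conjTranspose, Matrix.det_conjTranspose, ha'.2, star_one]

/-- The linear action of an invertible matrix on `ℂ²`. -/
def mAct (g : GL (Fin 2) ℂ) : E2 →ₗ[ℂ] E2 :=
  Matrix.toEuclideanLin (g : Matrix (Fin 2) (Fin 2) ℂ)

lemma mAct_mul (g h : GL (Fin 2) ℂ) : mAct (g * h) = (mAct g) ∘ₗ (mAct h) := by
  ext v
  simp [mAct, Matrix.toEuclideanLin_apply, Matrix.mulVec_mulVec]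

lemma mAct_one : mAct (1 : GL (Fin 2) ℂ) = LinearMap.id := by
  ext v
  simp [mAct, Matrix.toEuclideanLin_apply]

lemma mAct_inv_apply (g : GL (Fin 2) ℂ) (v : E2) : mAct g (mAct g⁻¹ v) = v := by
  have h : mAct g ∘ₗ mAct g⁻¹ = LinearMap.id := by
    rw [← mAct_mul, mul_inv_cancel, mAct_one]
  exact congrArg (fun f => f v) h

/-- The action of an invertible matrix on `ℂ²`, as a linear equivalence. -/
def mEquiv (g : GL (Fin 2) ℂ) : E2 ≃ₗ[ℂ] E2 :=
  LinearEquiv.ofLinear (mAct g) (mAct g⁻¹)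
    (by rw [← mAct_mul, mul_inv_cancel, mAct_one])
    (by rw [← mAct_mul, inv_mul_cancel, mAct_one])

/-- The projectivization `ℙ(ℂ²)`: points are the `1`-dimensional subspaces of `ℂ²`. -/
def ProjLine := {l : Submodule ℂ E2 // Module.finrank ℂ l = 1}

/-- The action of an invertible matrix on `ℙ(ℂ²)`, `g • l = g(l)`. -/
def lAct (g : GL (Fin 2) ℂ) (l : ProjLine) : ProjLine :=
  ⟨l.1.map ((mEquiv g : E2 ≃ₗ[ℂ] E2) : E2 →ₗ[ℂ] E2), by
    rw [LinearEquiv.finrank_map_eq]; exact l.2⟩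

/-- The space `H` of sections of the tautological bundle: maps `s : ℙ(ℂ²) → ℂ²`
with `s l ∈ l` for every line `l`. -/
def Hsec : Submodule ℂ (ProjLine → E2) where
  carrier := {s | ∀ l : ProjLine, s l ∈ l.1}
  add_mem' := fun ha hb l => Submodule.add_mem _ (ha l) (hb l)
  zero_mem' := fun l => Submodule.zero_mem _
  smul_mem' := fun c s hs l => Submodule.smul_mem _ c (hs l)

/-- Evaluation of a section at a line `l`: `e_l(s) = s(l)`. -/
def ev (l : ProjLine) : Hsec →ₗ[ℂ] E2 where
  toFun s := s.1 l
  map_add' := fun _ _ => rfl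
  map_smul' := fun _ _ => rfl

lemma sAct_mem (g : GL (Fin 2) ℂ) (s : Hsec) (l : ProjLine) :
    mAct g (s.1 (lAct g⁻¹ l)) ∈ l.1 := by
  obtain ⟨w, hw, hval⟩ := s.2 (lAct g⁻¹ l)
  have : s.1 (lAct g⁻¹ l) = mAct g⁻¹ w := hval.symm
  rw [this, mAct_inv_apply]
  exact hw

/-- The action of an invertible matrix on sections: `(g·s)(l) = g(s(g⁻¹•l))`. -/
def sAct (g : GL (Fin 2) ℂ) : Hsec →ₗ[ℂ] Hsec where
  toFun s := ⟨fun l => mAct g (s.1 (lAct g⁻¹ l)), fun l => sAct_mem g s l⟩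
  map_add' := fun a b => Subtype.ext <| funext fun l => (mAct g).map_add _ _
  map_smul' := fun c a => Subtype.ext <| funext fun l => (mAct g).map_smul c _

/-- The translated linear map `g·λ : v ↦ g·(λ(g⁻¹ v))`, for `λ : ℂ² → H`. -/
def lamAct (g : GL (Fin 2) ℂ) (lam : E2 →ₗ[ℂ] Hsec) : E2 →ₗ[ℂ] Hsec :=
  (sAct g) ∘ₗ lam ∘ₗ (mAct g⁻¹)

/-- Orthogonal projection of `ℂ²` onto a line `l`. -/
def prL (l : ProjLine) (v : E2) : E2 := (l.1.orthogonalProjectionOnto v : E2)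

/-- The vector `(1, 0) ∈ ℂ²`. -/
def v₀ : E2 := (WithLp.equiv 2 (Fin 2 → ℂ)).symm ![1, 0]

lemma v₀_ne : v₀ ≠ 0 := by
  intro h0
  have h1 := congrFun (congrArg (WithLp.equiv 2 (Fin 2 → ℂ)) h0) 0
  simp [v₀] at h1

/-- The line spanned by `(1, 0)`, as a point of `ℙ(ℂ²)`. -/
def x₀ : ProjLine := ⟨Submodule.span ℂ {v₀}, finrank_span_singleton v₀_ne⟩

/-- The map `λ₀ : ℂ² → H`, `λ₀(v)(l) = 2 · pr_l(v)`. -/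
def lam₀ : E2 →ₗ[ℂ] Hsec where
  toFun v := ⟨fun l => (2 : ℂ) • prL l v, fun l => l.1.smul_mem _ (Submodule.coe_mem _)⟩
  map_add' v w := Subtype.ext <| funext fun l => by
    show (2 : ℂ) • prL l (v + w) = (2 : ℂ) • prL l v + (2 : ℂ) • prL l w
    rw [prL, prL, prL, map_add, Submodule.coe_add, smul_add]
  map_smul' c v := Subtype.ext <| funext fun l => by
    show (2 : ℂ) • prL l (c • v) = c • ((2 : ℂ) • prL l v)
    rw [prL, prL, _root_.map_smul, Submodule.coe_smul, smul_comm]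

open Matrix

noncomputable def Fic (x y : ℂ) : ℂ := x*y*(x^10 + 11*x^5*y^5 - y^10)

/-- subgroup of GL₂ preserving the icosahedral form -/
def presF : Subgroup (GL (Fin 2) ℂ) where
  carrier := {g | ∀ x y : ℂ,
    Fic ((g : Matrix (Fin 2) (Fin 2) ℂ) 0 0 * x + (g : Matrix (Fin 2) (Fin 2) ℂ) 0 1 * y)
        ((g : Matrix (Fin 2) (Fin 2) ℂ) 1 0 * x + (g : Matrix (Fin 2) (Fin 2) ℂ) 1 1 * y)
      = Fic x y}
  one_mem' := by
    intro x y
    simp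
  mul_mem' := by
    intro a b ha hb
    intro x y
    have hm : ((a*b : GL (Fin 2) ℂ) : Matrix (Fin 2) (Fin 2) ℂ)
        = (a : Matrix (Fin 2) (Fin 2) ℂ) * (b : Matrix (Fin 2) (Fin 2) ℂ) := rfl
    set A := (a : Matrix (Fin 2) (Fin 2) ℂ)
    set B := (b : Matrix (Fin 2) (Fin 2) ℂ)
    have h1 : (A*B) 0 0 * x + (A*B) 0 1 * y
        = A 0 0 * (B 0 0 * x + B 0 1 * y) + A 0 1 * (B 1 0 * x + B 1 1 * y) := by
      simp [Matrix.mul_apply, Fin.sum_univ_two]; ring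
    have h2 : (A*B) 1 0 * x + (A*B) 1 1 * y
        = A 1 0 * (B 0 0 * x + B 0 1 * y) + A 1 1 * (B 1 0 * x + B 1 1 * y) := by
      simp [Matrix.mul_apply, Fin.sum_univ_two]; ring
    rw [hm, h1, h2, ha, hb]
  inv_mem' := by
    intro a ha
    intro x y
    set M := (a : Matrix (Fin 2) (Fin 2) ℂ) with hM
    set N := ((a⁻¹ : GL (Fin 2) ℂ) : Matrix (Fin 2) (Fin 2) ℂ) with hN
    have hMN : M * N = 1 := by
      rw [hM, hN, ← Units.val_mul, mul_inv_cancel, Units.val_one]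
    have h00 : M 0 0 * N 0 0 + M 0 1 * N 1 0 = 1 := by
      have := congrFun (congrFun hMN 0) 0
      simpa [Matrix.mul_apply, Fin.sum_univ_two] using this
    have h01 : M 0 0 * N 0 1 + M 0 1 * N 1 1 = 0 := by
      have := congrFun (congrFun hMN 0) 1
      simpa [Matrix.mul_apply, Fin.sum_univ_two] using this
    have h10 : M 1 0 * N 0 0 + M 1 1 * N 1 0 = 0 := by
      have := congrFun (congrFun hMN 1) 0
      simpa [Matrix.mul_apply, Fin.sum_univ_two] using this
    have h11 : M 1 0 * N 0 1 + M 1 1 * N 1 1 = 1 := by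
      have := congrFun (congrFun hMN 1) 1
      simpa [Matrix.mul_apply, Fin.sum_univ_two] using this
    have key := ha (N 0 0 * x + N 0 1 * y) (N 1 0 * x + N 1 1 * y)
    have e1 : M 0 0 * (N 0 0 * x + N 0 1 * y) + M 0 1 * (N 1 0 * x + N 1 1 * y) = x := by
      linear_combination x * h00 + y * h01
    have e2 : M 1 0 * (N 0 0 * x + N 0 1 * y) + M 1 1 * (N 1 0 * x + N 1 1 * y) = y := by
      linear_combination x * h10 + y * h11
    rw [e1, e2] at key
    exact key.symm
lemma Fic_hom (c u v : ℂ) : Fic (c*u) (c*v) = c^12 * Fic u v := by unfold Fic; ring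

lemma Tkey (t x y : ℂ) (ht : t^2 = 1 - t) :
    Fic (t*x + y) (x - t*y) = (t-2)^6 * Fic x y := by
  unfold Fic
  linear_combination (- (65:ℂ)*x*y^11 + (693:ℂ)*x^6*y^6 + (65:ℂ)*x^11*y + (1:ℂ)*t*y^12 + (127:ℂ)*t*x*y^11 - (11:ℂ)*t*x^2*y^10 + (66:ℂ)*t*x^5*y^7 - (1419:ℂ)*t*x^6*y^6 - (66:ℂ)*t*x^7*y^5 - (11:ℂ)*t*x^10*y^2 - (127:ℂ)*t*x^11*y + (1:ℂ)*t*x^12 + (1:ℂ)*t^2*y^12 - (167:ℂ)*t^2*x*y^11 - (11:ℂ)*t^2*x^2*y^10 - (55:ℂ)*t^2*x^3*y^9 - (165:ℂ)*t^2*x^4*y^8 + (66:ℂ)*t^2*x^5*y^7 + (2310:ℂ)*t^2*x^6*y^6 - (66:ℂ)*t^2*x^7*y^5 - (165:ℂ)*t^2*x^8*y^4 + (55:ℂ)*t^2*x^9*y^3 - (11:ℂ)*t^2*x^10*y^2 + (167:ℂ)*t^2*x^11*y + (1:ℂ)*t^2*x^12 + (2:ℂ)*t^3*y^12 + (120:ℂ)*t^3*x*y^11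 + (33:ℂ)*t^3*x^2*y^10 + (165:ℂ)*t^3*x^3*y^9 - (330:ℂ)*t^3*x^4*y^8 - (858:ℂ)*t^3*x^5*y^7 - (869:ℂ)*t^3*x^6*y^6 + (858:ℂ)*t^3*x^7*y^5 - (330:ℂ)*t^3*x^8*y^4 - (165:ℂ)*t^3*x^9*y^3 + (33:ℂ)*t^3*x^10*y^2 - (120:ℂ)*t^3*x^11*y + (2:ℂ)*t^3*x^12 + (3:ℂ)*t^4*y^12 - (107:ℂ)*t^4*x*y^11 - (143:ℂ)*t^4*x^2*y^10 + (275:ℂ)*t^4*x^3*y^9 + (825:ℂ)*t^4*x^4*y^8 - (1122:ℂ)*t^4*x^5*y^7 - (374:ℂ)*t^4*x^6*y^6 + (1122:ℂ)*t^4*x^7*y^5 + (825:ℂ)*t^4*x^8*y^4 - (275:ℂ)*t^4*x^9*y^3 - (143:ℂ)*t^4*x^10*y^2 + (107:ℂ)*t^4*x^11*y + (3:ℂ)*t^4*x^12 + (5:ℂ)*t^5*y^12 + (91:ℂ)*t^5*x*y^11 - (110:ℂ)*t^5*x^2*y^10 - (550:ℂ)*t^5*x^3*y^9 + (825:ℂ)*t^5*x^4*y^8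 + (1320:ℂ)*t^5*x^5*y^7 - (2299:ℂ)*t^5*x^6*y^6 - (1320:ℂ)*t^5*x^7*y^5 + (825:ℂ)*t^5*x^8*y^4 + (550:ℂ)*t^5*x^9*y^3 - (110:ℂ)*t^5*x^10*y^2 - (91:ℂ)*t^5*x^11*y + (5:ℂ)*t^5*x^12 - (3:ℂ)*t^6*y^12 - (17:ℂ)*t^6*x*y^11 + (143:ℂ)*t^6*x^2*y^10 - (275:ℂ)*t^6*x^3*y^9 - (825:ℂ)*t^6*x^4*y^8 + (1122:ℂ)*t^6*x^5*y^7 + (1738:ℂ)*t^6*x^6*y^6 - (1122:ℂ)*t^6*x^7*y^5 - (825:ℂ)*t^6*x^8*y^4 + (275:ℂ)*t^6*x^9*y^3 + (143:ℂ)*t^6*x^10*y^2 + (17:ℂ)*t^6*x^11*y - (3:ℂ)*t^6*x^12 + (2:ℂ)*t^7*y^12 + (8:ℂ)*t^7*x*y^11 + (33:ℂ)*t^7*x^2*y^10 + (165:ℂ)*t^7*x^3*y^9 - (330:ℂ)*t^7*x^4*y^8 - (858:ℂ)*t^7*x^5*y^7 + (363:ℂ)*t^7*x^6*y^6 + (858:ℂ)*t^7*x^7*y^5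 - (330:ℂ)*t^7*x^8*y^4 - (165:ℂ)*t^7*x^9*y^3 + (33:ℂ)*t^7*x^10*y^2 - (8:ℂ)*t^7*x^11*y + (2:ℂ)*t^7*x^12 - (1:ℂ)*t^8*y^12 - (9:ℂ)*t^8*x*y^11 + (11:ℂ)*t^8*x^2*y^10 + (55:ℂ)*t^8*x^3*y^9 + (165:ℂ)*t^8*x^4*y^8 - (66:ℂ)*t^8*x^5*y^7 - (374:ℂ)*t^8*x^6*y^6 + (66:ℂ)*t^8*x^7*y^5 + (165:ℂ)*t^8*x^8*y^4 - (55:ℂ)*t^8*x^9*y^3 + (11:ℂ)*t^8*x^10*y^2 + (9:ℂ)*t^8*x^11*y - (1:ℂ)*t^8*x^12 + (1:ℂ)*t^9*y^12 - (1:ℂ)*t^9*x*y^11 - (11:ℂ)*t^9*x^2*y^10 + (66:ℂ)*t^9*x^5*y^7 - (11:ℂ)*t^9*x^6*y^6 - (66:ℂ)*t^9*x^7*y^5 - (11:ℂ)*t^9*x^10*y^2 + (1:ℂ)*t^9*x^11*y + (1:ℂ)*t^9*x^12 + (1:ℂ)*t^10*x*y^11 + (11:ℂ)*t^10*x^6*y^6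 - (1:ℂ)*t^10*x^11*y) * ht

section gens
variable (ε : ℂ) (hε : IsPrimitiveRoot ε 5)

lemma eps5 (hε : IsPrimitiveRoot ε 5) : ε ^ 5 = 1 := hε.pow_eq_one

lemma epssum (hε : IsPrimitiveRoot ε 5) : ε^4 + ε^3 + ε^2 + ε + 1 = 0 := by
  have h5 := eps5 ε hε
  have hne : ε ≠ 1 := hε.ne_one (by norm_num)
  have : (ε - 1) * (ε^4 + ε^3 + ε^2 + ε + 1) = 0 := by linear_combination h5
  rcases mul_eq_zero.mp this with h | h
  · exact absurd (sub_eq_zero.mp h) hne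
  · exact h

lemma tau_sq (hε : IsPrimitiveRoot ε 5) : (ε + ε^4)^2 = 1 - (ε + ε^4) := by
  linear_combination (2 + ε^3) * eps5 ε hε + epssum ε hε

lemma d_sq (hε : IsPrimitiveRoot ε 5) : (ε^2 - ε^3)^2 = (ε + ε^4) - 2 := by
  linear_combination (ε - 2) * eps5 ε hε

lemma d_ne (hε : IsPrimitiveRoot ε 5) : ε^2 - ε^3 ≠ 0 := by
  have h : ε^2 - ε^3 = ε^2 * (1 - ε) := by ring
  rw [h]
  exact mul_ne_zero (pow_ne_zero _ (hε.ne_zero (by norm_num)))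
    (sub_ne_zero.mpr (Ne.symm (hε.ne_one (by norm_num))))

lemma ce_key (hε : IsPrimitiveRoot ε 5) :
    ((ε^2 - ε^3)⁻¹)^2 * ((ε + ε^4) - 2) = 1 := by
  rw [← d_sq ε hε]
  rw [inv_pow]; exact inv_mul_cancel₀ (pow_ne_zero 2 (d_ne ε hε))
end gens
section genmem
variable (ε : ℂ)

lemma entry_facts (g : GL (Fin 2) ℂ) (a b c d : ℂ)
    (h : (g : Matrix (Fin 2) (Fin 2) ℂ) = !![a, b; c, d]) :
    (g : Matrix (Fin 2) (Fin 2) ℂ) 0 0 = a ∧ (g : Matrix (Fin 2) (Fin 2) ℂ) 0 1 = b ∧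
    (g : Matrix (Fin 2) (Fin 2) ℂ) 1 0 = c ∧ (g : Matrix (Fin 2) (Fin 2) ℂ) 1 1 = d := by
  refine ⟨?_, ?_, ?_, ?_⟩ <;> rw [h] <;> simp

lemma S_mem_presF (hε : IsPrimitiveRoot ε 5) (S : GL (Fin 2) ℂ)
    (hS : (S : Matrix (Fin 2) (Fin 2) ℂ) = !![ε ^ 3, 0; 0, ε ^ 2]) : S ∈ presF := by
  intro x y
  obtain ⟨h00, h01, h10, h11⟩ := entry_facts S _ _ _ _ hS
  rw [h00, h01, h10, h11]
  have h5 := eps5 ε hε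
  have e25 : ε ^ 25 = 1 := by rw [show (25:ℕ) = 5*5 by norm_num, pow_mul, h5, one_pow]
  have e30 : ε ^ 30 = 1 := by rw [show (30:ℕ) = 5*6 by norm_num, pow_mul, h5, one_pow]
  have e35 : ε ^ 35 = 1 := by rw [show (35:ℕ) = 5*7 by norm_num, pow_mul, h5, one_pow]
  unfold Fic
  linear_combination (x^11*y) * e35 + (11*x^6*y^6) * e30 - (x*y^11) * e25

lemma U_mem_presF (U : GL (Fin 2) ℂ)
    (hU : (U : Matrix (Fin 2) (Fin 2) ℂ) = !![0, 1; -1, 0]) : U ∈ presF := by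
  intro x y
  obtain ⟨h00, h01, h10, h11⟩ := entry_facts U _ _ _ _ hU
  rw [h00, h01, h10, h11]
  unfold Fic
  ring

lemma T_mem_presF (hε : IsPrimitiveRoot ε 5) (T : GL (Fin 2) ℂ)
    (hT : (T : Matrix (Fin 2) (Fin 2) ℂ) =
      (ε ^ 2 - ε ^ 3)⁻¹ • !![ε + ε ^ 4, 1; 1, -(ε + ε ^ 4)]) : T ∈ presF := by
  intro x y
  set c := (ε ^ 2 - ε ^ 3)⁻¹ with hc
  set t := ε + ε ^ 4 with htau
  have hT' : (T : Matrix (Fin 2) (Fin 2) ℂ) = !![c*t, c*1; c*1, c*(-t)] := by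
    rw [hT]
    ext i j
    fin_cases i <;> fin_cases j <;> simp
  obtain ⟨h00, h01, h10, h11⟩ := entry_facts T _ _ _ _ hT'
  rw [h00, h01, h10, h11]
  have ht : t^2 = 1 - t := tau_sq ε hε
  have hce : c^2 * (t - 2) = 1 := ce_key ε hε
  rw [show c * t * x + c * 1 * y = c * (t*x + y) by ring,
      show c * 1 * x + c * (-t) * y = c * (x - t*y) by ring,
      Fic_hom, Tkey t x y ht]
  linear_combination (Fic x y) * ((c^2*(t-2))^5 + (c^2*(t-2))^4 + (c^2*(t-2))^3
    + (c^2*(t-2))^2 + c^2*(t-2) + 1) * hce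
end genmem
lemma mem_SU2_iff (g : GL (Fin 2) ℂ) :
    g ∈ SU2 ↔ (g : Matrix (Fin 2) (Fin 2) ℂ) ∈ Matrix.specialUnitaryGroup (Fin 2) ℂ :=
  Iff.rfl

section su2mem
variable (ε : ℂ)

lemma conj_eps (hε : IsPrimitiveRoot ε 5) : (starRingEnd ℂ) ε = ε ^ 4 := by
  have h5 := eps5 ε hε
  have hn : ‖ε‖ = 1 := Complex.norm_eq_one_of_pow_eq_one h5 (by norm_num)
  have h1 : ε⁻¹ = (starRingEnd ℂ) ε := Complex.inv_eq_conj hn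
  rw [← h1]
  refine inv_eq_of_mul_eq_one_right ?_
  rw [← pow_succ']
  exact h5

lemma S_mem_SU2 (hε : IsPrimitiveRoot ε 5) (S : GL (Fin 2) ℂ)
    (hS : (S : Matrix (Fin 2) (Fin 2) ℂ) = !![ε ^ 3, 0; 0, ε ^ 2]) : S ∈ SU2 := by
  have h5 := eps5 ε hε
  have hst := conj_eps ε hε
  rw [mem_SU2_iff, Matrix.mem_specialUnitaryGroup_iff, Matrix.mem_unitaryGroup_iff', hS]
  constructor
  · ext i j
    fin_cases i <;> fin_cases j <;>
      simp [Matrix.mul_apply, Fin.sum_univ_two, Matrix.star_apply, Matrix.one_apply,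
        Complex.star_def, map_pow, hst] <;>
      first
        | ring1
        | linear_combination (ε^10 + ε^5 + 1) * h5
        | linear_combination (ε^5 + 1) * h5
        | linear_combination h5
  · rw [Matrix.det_fin_two_of]
    linear_combination h5

lemma U_mem_SU2 (U : GL (Fin 2) ℂ)
    (hU : (U : Matrix (Fin 2) (Fin 2) ℂ) = !![0, 1; -1, 0]) : U ∈ SU2 := by
  rw [mem_SU2_iff, Matrix.mem_specialUnitaryGroup_iff, Matrix.mem_unitaryGroup_iff', hU]
  constructor
  · ext i j
    fin_cases i <;> fin_cases j <;>
      simp [Matrix.mul_apply, Fin.sum_univ_two, Matrix.star_apply, Matrix.one_apply]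
  · rw [Matrix.det_fin_two_of]; ring

lemma T_mem_SU2 (hε : IsPrimitiveRoot ε 5) (T : GL (Fin 2) ℂ)
    (hT : (T : Matrix (Fin 2) (Fin 2) ℂ) =
      (ε ^ 2 - ε ^ 3)⁻¹ • !![ε + ε ^ 4, 1; 1, -(ε + ε ^ 4)]) : T ∈ SU2 := by
  have h5 := eps5 ε hε
  have hsum := epssum ε hε
  have hst := conj_eps ε hε
  have ht : (ε + ε^4)^2 = 1 - (ε + ε^4) := tau_sq ε hε
  have hce : ((ε^2 - ε^3)⁻¹)^2 * ((ε + ε^4) - 2) = 1 := ce_key ε hε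
  have hT' : (T : Matrix (Fin 2) (Fin 2) ℂ) =
      !![(ε^2 - ε^3)⁻¹ * (ε + ε^4), (ε^2 - ε^3)⁻¹ * 1;
         (ε^2 - ε^3)⁻¹ * 1, (ε^2 - ε^3)⁻¹ * (-(ε + ε^4))] := by
    rw [hT]; ext i j; fin_cases i <;> fin_cases j <;> simp
  have hQ : ((ε^8 - ε^12 : ℂ))⁻¹ = -((ε^2 - ε^3)⁻¹) := by
    rw [show (ε^8 - ε^12 : ℂ) = -(ε^2 - ε^3) by
      linear_combination (ε^3 - ε^7 - ε^2) * h5, inv_neg]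
  have hQ' : (((ε^4)^2 - (ε^4)^3 : ℂ))⁻¹ = -((ε^2 - ε^3)⁻¹) := by
    rw [show ((ε^4)^2 - (ε^4)^3 : ℂ) = -(ε^2 - ε^3) by
      linear_combination (ε^3 - ε^7 - ε^2) * h5, inv_neg]
  rw [mem_SU2_iff, Matrix.mem_specialUnitaryGroup_iff, Matrix.mem_unitaryGroup_iff', hT']
  constructor
  · ext i j
    fin_cases i <;> fin_cases j <;>
      (simp [Matrix.mul_apply, Fin.sum_univ_two, Matrix.one_apply, Matrix.star_apply,
        Complex.star_def, hst]
       try simp only [hQ, hQ']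
       first
        | ring1
        | linear_combination hce - ((ε^2-ε^3)⁻¹)^2 * hsum
            - ((ε^2-ε^3)⁻¹)^2 * (2 + ε^3 + ε^12 + ε^7 + ε^2 + ε^15 + ε^10 + ε^5) * h5
        | linear_combination ((ε^2-ε^3)⁻¹)^2 * ε * (ε^10 + ε^5 + 1) * h5
        | linear_combination -(((ε^2-ε^3)⁻¹)^2 * ε * (ε^10 + ε^5 + 1)) * h5)
  · rw [Matrix.det_fin_two_of]
    linear_combination (-(((ε^2 - ε^3)⁻¹)^2)) * ht + hce
end su2mem
section geom

lemma mulVec_e0 (A : Matrix (Fin 2) (Fin 2) ℂ) : A.mulVec ![1,0] = ![A 0 0, A 1 0] := by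
  funext i
  fin_cases i <;> simp [Matrix.mulVec, dotProduct, Fin.sum_univ_two, Matrix.vecHead]

lemma lAct_fix_iff (g : GL (Fin 2) ℂ) :
    lAct g x₀ = x₀ ↔ (g : Matrix (Fin 2) (Fin 2) ℂ) 1 0 = 0 := by
  have hdet : IsUnit ((g : Matrix (Fin 2) (Fin 2) ℂ).det) :=
    (Matrix.isUnit_iff_isUnit_det _).mp ⟨g, rfl⟩
  have hdet2 : (g : Matrix (Fin 2) (Fin 2) ℂ) 0 0 * (g : Matrix (Fin 2) (Fin 2) ℂ) 1 1
      - (g : Matrix (Fin 2) (Fin 2) ℂ) 0 1 * (g : Matrix (Fin 2) (Fin 2) ℂ) 1 0 ≠ 0 := by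
    rw [← Matrix.det_fin_two]
    exact hdet.ne_zero
  have hval : ((mEquiv g : E2 ≃ₗ[ℂ] E2) : E2 →ₗ[ℂ] E2) v₀
      = (WithLp.equiv 2 (Fin 2 → ℂ)).symm
          ![(g : Matrix (Fin 2) (Fin 2) ℂ) 0 0, (g : Matrix (Fin 2) (Fin 2) ℂ) 1 0] := by
    show mAct g v₀ = _
    rw [mAct, Matrix.toEuclideanLin_apply, v₀]
    change WithLp.toLp 2 ((g : Matrix (Fin 2) (Fin 2) ℂ) *ᵥ ![1, 0]) = WithLp.toLp 2 _
    rw [mulVec_e0]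
  have hmap : (lAct g x₀).1 = Submodule.span ℂ
      {(WithLp.equiv 2 (Fin 2 → ℂ)).symm
        ![(g : Matrix (Fin 2) (Fin 2) ℂ) 0 0, (g : Matrix (Fin 2) (Fin 2) ℂ) 1 0]} := by
    show (Submodule.span ℂ {v₀}).map _ = _
    rw [Submodule.map_span, Set.image_singleton, hval]
  constructor
  · intro hfix
    have hw : (WithLp.equiv 2 (Fin 2 → ℂ)).symm
        ![(g : Matrix (Fin 2) (Fin 2) ℂ) 0 0, (g : Matrix (Fin 2) (Fin 2) ℂ) 1 0]
        ∈ Submodule.span ℂ {v₀} := by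
      have h1 : (lAct g x₀).1 = Submodule.span ℂ {v₀} := congrArg Subtype.val hfix
      rw [← h1, hmap]
      exact Submodule.mem_span_singleton_self _
    obtain ⟨c, hc⟩ := Submodule.mem_span_singleton.mp hw
    have h2 := congrFun (congrArg (WithLp.equiv 2 (Fin 2 → ℂ)) hc) 1
    simpa [v₀] using h2.symm
  · intro h10
    have ha0 : (g : Matrix (Fin 2) (Fin 2) ℂ) 0 0 ≠ 0 := by
      intro h0
      rw [h0, h10] at hdet2
      simp at hdet2
    apply Subtype.ext
    rw [hmap, h10]
    have hw : (WithLp.equiv 2 (Fin 2 → ℂ)).symm ![(g : Matrix (Fin 2) (Fin 2) ℂ) 0 0, 0]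
        = (g : Matrix (Fin 2) (Fin 2) ℂ) 0 0 • v₀ := by
      apply (WithLp.equiv 2 (Fin 2 → ℂ)).injective
      rw [Equiv.apply_symm_apply]
      change _ = (g : Matrix (Fin 2) (Fin 2) ℂ) 0 0 • (WithLp.equiv 2 (Fin 2 → ℂ)) v₀
      rw [v₀, Equiv.apply_symm_apply]
      funext i
      fin_cases i <;> simp
    rw [hw]
    exact Submodule.span_singleton_smul_eq (isUnit_iff_ne_zero.mpr ha0) v₀

lemma su2_triangular (g : GL (Fin 2) ℂ) (hg : g ∈ SU2)
    (h10 : (g : Matrix (Fin 2) (Fin 2) ℂ) 1 0 = 0) :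
    (g : Matrix (Fin 2) (Fin 2) ℂ) 0 1 = 0 ∧
    (g : Matrix (Fin 2) (Fin 2) ℂ) 0 0 * (g : Matrix (Fin 2) (Fin 2) ℂ) 1 1 = 1 := by
  obtain ⟨hu, hdet⟩ := (Matrix.mem_specialUnitaryGroup_iff).mp ((mem_SU2_iff g).mp hg)
  have hu' := Matrix.mem_unitaryGroup_iff'.mp hu
  set A := (g : Matrix (Fin 2) (Fin 2) ℂ)
  have h00 : (starRingEnd ℂ) (A 0 0) * A 0 0 = 1 := by
    have := congrFun (congrFun hu' 0) 0
    simpa [Matrix.mul_apply, Fin.sum_univ_two, Matrix.star_apply, Matrix.one_apply,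
      Complex.star_def, h10] using this
  have h01 : (starRingEnd ℂ) (A 0 0) * A 0 1 = 0 := by
    have := congrFun (congrFun hu' 0) 1
    simpa [Matrix.mul_apply, Fin.sum_univ_two, Matrix.star_apply, Matrix.one_apply,
      Complex.star_def, h10] using this
  have hc0 : (starRingEnd ℂ) (A 0 0) ≠ 0 := left_ne_zero_of_mul_eq_one h00
  have hdet2 : A 0 0 * A 1 1 = 1 := by
    rw [Matrix.det_fin_two] at hdet
    linear_combination hdet + A 0 1 * h10
  refine ⟨?_, hdet2⟩
  rcases mul_eq_zero.mp h01 with h | h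
  · exact absurd h hc0
  · exact h

lemma diag_pow (x y : ℂ) (k : ℕ) : (!![x, 0; 0, y])^k = !![x^k, 0; 0, y^k] := by
  induction k with
  | zero =>
    ext i j
    fin_cases i <;> fin_cases j <;> simp [Matrix.one_apply]
  | succ n ih =>
    rw [pow_succ, ih]
    ext i j
    fin_cases i <;> fin_cases j <;>
      simp [Matrix.mul_apply, Fin.sum_univ_two, pow_succ]

lemma countY : Nat.card {a : ℂ // a ^ 10 = 1} = 10 := by
  have hprim : IsPrimitiveRoot (Complex.exp (2 * Real.pi * Complex.I / (10:ℕ))) 10 :=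
    Complex.isPrimitiveRoot_exp 10 (by norm_num)
  have e : {a : ℂ // a ^ 10 = 1} ≃ (Polynomial.nthRootsFinset 10 (1 : ℂ)) :=
    Equiv.subtypeEquivRight (fun x => (Polynomial.mem_nthRootsFinset (by norm_num) (1 : ℂ)).symm)
  rw [Nat.card_congr e, Nat.card_eq_fintype_card, Fintype.card_coe,
    hprim.card_nthRootsFinset]

end geom
theorem stmt13 (ε : ℂ) (hε : IsPrimitiveRoot ε 5)
    (S T U : GL (Fin 2) ℂ)
    (hS : (S : Matrix (Fin 2) (Fin 2) ℂ) = !![ε ^ 3, 0; 0, ε ^ 2])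
    (hT : (T : Matrix (Fin 2) (Fin 2) ℂ) =
      (ε ^ 2 - ε ^ 3)⁻¹ • !![ε + ε ^ 4, 1; 1, -(ε + ε ^ 4)])
    (hU : (U : Matrix (Fin 2) (Fin 2) ℂ) = !![0, 1; -1, 0])
    (Gicosa : Subgroup (GL (Fin 2) ℂ)) (hG : Gicosa = Subgroup.closure {S, T, U}) :
    Nat.card {g : GL (Fin 2) ℂ // g ∈ Gicosa ∧ lAct g x₀ = x₀} = 10 := by
  have h5 := eps5 ε hε
  -- the group lies in presF and SU2
  have hP : Gicosa ≤ presF := by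
    rw [hG]
    refine (Subgroup.closure_le _).mpr ?_
    intro g hg
    simp only [Set.mem_insert_iff, Set.mem_singleton_iff] at hg
    rcases hg with rfl | rfl | rfl
    · exact S_mem_presF ε hε g hS
    · exact T_mem_presF ε hε g hT
    · exact U_mem_presF g hU
  have hSU : Gicosa ≤ SU2 := by
    rw [hG]
    refine (Subgroup.closure_le _).mpr ?_
    intro g hg
    simp only [Set.mem_insert_iff, Set.mem_singleton_iff] at hg
    rcases hg with rfl | rfl | rfl
    · exact S_mem_SU2 ε hε g hS
    · exact T_mem_SU2 ε hε g hT
    · exact U_mem_SU2 g hU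
  -- structure of stabilizer elements
  have key : ∀ g : GL (Fin 2) ℂ, g ∈ Gicosa → lAct g x₀ = x₀ →
      ((g : Matrix (Fin 2) (Fin 2) ℂ) 0 0) ^ 10 = 1 ∧
      (g : Matrix (Fin 2) (Fin 2) ℂ)
        = !![(g : Matrix (Fin 2) (Fin 2) ℂ) 0 0, 0; 0,
             ((g : Matrix (Fin 2) (Fin 2) ℂ) 0 0)⁻¹] := by
    intro g hmem hfix
    have h10 : (g : Matrix (Fin 2) (Fin 2) ℂ) 1 0 = 0 := (lAct_fix_iff g).mp hfix
    obtain ⟨h01, hab⟩ := su2_triangular g (hSU hmem) h10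
    have hp := hP hmem
    have E1 := hp 1 1
    have E2 := hp 1 2
    rw [h01, h10] at E1 E2
    simp only [Fic] at E1 E2
    set a := (g : Matrix (Fin 2) (Fin 2) ℂ) 0 0 with ha'
    set b := (g : Matrix (Fin 2) (Fin 2) ℂ) 1 1 with hb'
    have hb10 : b ^ 10 = 1 := by
      linear_combination (1/1023) * E1 - (1/2046) * E2
        - (b^10 - (341/1023) * ((a*b)^5 + (a*b)^4 + (a*b)^3 + (a*b)^2 + a*b + 1)) * hab
    have ha10 : a ^ 10 = 1 := by
      linear_combination (-(a^10)) * hb10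
        + ((a*b)^9 + (a*b)^8 + (a*b)^7 + (a*b)^6 + (a*b)^5 + (a*b)^4 + (a*b)^3
           + (a*b)^2 + (a*b) + 1) * hab
    refine ⟨ha10, ?_⟩
    have hb : b = a⁻¹ := (inv_eq_of_mul_eq_one_right hab).symm
    have heta := Matrix.eta_fin_two (g : Matrix (Fin 2) (Fin 2) ℂ)
    rw [h01, h10, ← ha', ← hb', hb] at heta
    exact heta
  -- membership of the generators
  have hmemS : S ∈ Gicosa := by
    rw [hG]; exact Subgroup.subset_closure (by simp)
  have hmemU : U ∈ Gicosa := by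
    rw [hG]; exact Subgroup.subset_closure (by simp)
  have hU2 : ((U^2 : GL (Fin 2) ℂ) : Matrix (Fin 2) (Fin 2) ℂ) = !![-1, 0; 0, -1] := by
    rw [Units.val_pow_eq_pow_val, hU, sq]
    ext i j
    fin_cases i <;> fin_cases j <;> simp [Matrix.mul_apply, Fin.sum_univ_two]
  have hSpow : ∀ k : ℕ, ((S^k : GL (Fin 2) ℂ) : Matrix (Fin 2) (Fin 2) ℂ)
      = !![ε^(3*k), 0; 0, ε^(2*k)] := by
    intro k
    rw [Units.val_pow_eq_pow_val, hS, diag_pow, ← pow_mul, ← pow_mul]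
  -- all diagonal matrices with 10th-root entries lie in the group
  have memD : ∀ a : ℂ, a ^ 10 = 1 →
      ∃ g' : GL (Fin 2) ℂ, g' ∈ Gicosa ∧
        (g' : Matrix (Fin 2) (Fin 2) ℂ) = !![a, 0; 0, a⁻¹] := by
    intro a ha
    have hd : (a^5 - 1) * (a^5 + 1) = 0 := by linear_combination ha
    rcases mul_eq_zero.mp hd with h | h
    · have h1 : a^5 = 1 := by linear_combination h
      obtain ⟨i, _, hi⟩ := hε.eq_pow_of_pow_eq_one h1
      refine ⟨S^(2*i), Subgroup.pow_mem _ hmemS _, ?_⟩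
      rw [hSpow]
      have e1 : ε^(3*(2*i)) = a := by
        rw [show 3*(2*i) = 5*i + i by ring, pow_add, pow_mul, h5, one_pow, one_mul, hi]
      have e2 : ε^(2*(2*i)) = a⁻¹ := by
        refine (inv_eq_of_mul_eq_one_right ?_).symm
        rw [← hi, ← pow_add, show i + 2*(2*i) = 5*i by ring, pow_mul, h5, one_pow]
      rw [e1, e2]
    · have h1 : (-a)^5 = 1 := by linear_combination -h
      obtain ⟨i, _, hi⟩ := hε.eq_pow_of_pow_eq_one h1
      refine ⟨U^2 * S^(2*i),
        mul_mem (Subgroup.pow_mem _ hmemU _) (Subgroup.pow_mem _ hmemS _), ?_⟩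
      rw [Units.val_mul, hU2, hSpow]
      have e1 : -ε^(3*(2*i)) = a := by
        rw [show 3*(2*i) = 5*i + i by ring, pow_add, pow_mul, h5, one_pow, one_mul, hi]
        ring
      have e2 : -ε^(2*(2*i)) = a⁻¹ := by
        refine (inv_eq_of_mul_eq_one_right ?_).symm
        have h2 : (-a) * ε^(2*(2*i)) = 1 := by
          rw [← hi, ← pow_add, show i + 2*(2*i) = 5*i by ring, pow_mul, h5, one_pow]
        linear_combination h2
      have hprod : (!![(-1:ℂ), 0; 0, -1] * !![ε^(3*(2*i)), 0; 0, ε^(2*(2*i))])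
          = !![-ε^(3*(2*i)), 0; 0, -ε^(2*(2*i))] := by
        ext i' j'
        fin_cases i' <;> fin_cases j' <;> simp [Matrix.mul_apply, Fin.sum_univ_two]
      rw [hprod, e1, e2]
  -- the counting bijection
  let f : {g : GL (Fin 2) ℂ // g ∈ Gicosa ∧ lAct g x₀ = x₀} → {a : ℂ // a ^ 10 = 1} :=
    fun p => ⟨(p.1 : Matrix (Fin 2) (Fin 2) ℂ) 0 0, (key p.1 p.2.1 p.2.2).1⟩
  have hbij : Function.Bijective f := by
    constructor
    · intro p q hpq
      have ha : (p.1 : Matrix (Fin 2) (Fin 2) ℂ) 0 0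
          = (q.1 : Matrix (Fin 2) (Fin 2) ℂ) 0 0 := congrArg Subtype.val hpq
      have hp2 := (key p.1 p.2.1 p.2.2).2
      have hq2 := (key q.1 q.2.1 q.2.2).2
      apply Subtype.ext
      apply Units.ext
      rw [hp2, hq2, ha]
    · intro b
      obtain ⟨g', hmem', hmat⟩ := memD b.1 b.2
      have hfix : lAct g' x₀ = x₀ := by
        rw [lAct_fix_iff, hmat]
        simp
      refine ⟨⟨g', hmem', hfix⟩, ?_⟩
      apply Subtype.ext
      show (g' : Matrix (Fin 2) (Fin 2) ℂ) 0 0 = b.1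
      rw [hmat]
      simp
  rw [Nat.card_eq_of_bijective f hbij, countY]
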